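/- arXiv:1912.11492 — 5 statements merged into one kernel-verified Lean document; each statement's English description precedes it below -/
import Mathlib

section
/- Let x ∈ Δ_{n-1} and let d = ±(e_i − x) for some index i. Then ‖d‖₁ ≤ 2‖d‖, where ‖·‖ is the Euclidean norm. Consequently, for any step x' = x + α d with α ≥ 0, one has ‖x' − x‖₁ ≤ 2‖x' − x‖. -/
def probSimplex (n : ℕ) : Set (EuclideanSpace ℝ (Fin n)) :=
  {x | (∀ i, 0 ≤ x i) ∧ ∑ i, x i = 1}

noncomputable def stdVec {n : ℕ} (i : Fin n) : EuclideanSpace ℝ (Fin n) :=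
  EuclideanSpace.single i 1

lemma coord_le_norm {n : ℕ} (d : EuclideanSpace ℝ (Fin n)) (i : Fin n) :
    |d i| ≤ ‖d‖ := by
  rw [EuclideanSpace.norm_eq]
  have : |d i| = Real.sqrt (‖d i‖ ^ 2) := by
    rw [Real.sqrt_sq_eq_abs, abs_norm, Real.norm_eq_abs]
  rw [this]
  apply Real.sqrt_le_sqrt
  exact Finset.single_le_sum (f := fun j => ‖d j‖ ^ 2)
    (fun j _ => by positivity) (Finset.mem_univ i)

lemma key {n : ℕ} (x : EuclideanSpace ℝ (Fin n)) (hx : x ∈ probSimplex n) (i : Fin n)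
    (d : EuclideanSpace ℝ (Fin n)) (hd : d = stdVec i - x) :
    (∑ j, |d j|) ≤ 2 * ‖d‖ := by
  obtain ⟨hpos, hsum⟩ := hx
  have hxi1 : x i ≤ 1 := by
    rw [← hsum]
    exact Finset.single_le_sum (fun j _ => hpos j) (Finset.mem_univ i)
  have hdj : ∀ j, d j = (if j = i then (1:ℝ) else 0) - x j := by
    intro j
    simp [hd, stdVec, EuclideanSpace.single_apply]
  have hsum2 : (∑ j, |d j|) = 2 * (1 - x i) := by
    rw [← Finset.sum_erase_add _ _ (Finset.mem_univ i)]
    have h1 : |d i| = 1 - x i := by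
      rw [hdj i]; simp [abs_of_nonneg (by linarith : (0:ℝ) ≤ 1 - x i)]
    have h2 : ∀ j ∈ Finset.univ.erase i, |d j| = x j := by
      intro j hj
      rw [hdj j, if_neg (Finset.ne_of_mem_erase hj)]
      simp [abs_of_nonpos (by linarith [hpos j] : (0:ℝ) - x j ≤ 0), abs_of_nonneg (hpos j)]
    rw [Finset.sum_congr rfl h2, h1]
    have : (∑ j ∈ Finset.univ.erase i, x j) = 1 - x i := by
      have := Finset.sum_erase_add Finset.univ x (Finset.mem_univ i)
      linarith [this]
    rw [this]; ring
  rw [hsum2]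
  have h3 : 1 - x i = |d i| := by
    rw [hdj i]; simp [abs_of_nonneg (by linarith : (0:ℝ) ≤ 1 - x i)]
  rw [h3]
  have := coord_le_norm d i
  linarith

/-- For `x` in the simplex and `d = ±(e i − x)` (a Frank–Wolfe or away direction),
`‖d‖₁ ≤ 2‖d‖`; consequently, for any step `x' = x + α • d` with `α ≥ 0`,
`‖x' − x‖₁ ≤ 2‖x' − x‖`. -/
theorem l1_le_two_norm_of_afw_dir {n : ℕ} (x d : EuclideanSpace ℝ (Fin n))
    (hx : x ∈ probSimplex n) (i : Fin n)
    (hd : d = stdVec i - x ∨ d = -(stdVec i - x)) :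
    (∑ j, |d j|) ≤ 2 * ‖d‖ ∧
      ∀ α : ℝ, 0 ≤ α → ∀ x' : EuclideanSpace ℝ (Fin n), x' = x + α • d →
        (∑ j, |x' j - x j|) ≤ 2 * ‖x' - x‖ := by
  have hmain : (∑ j, |d j|) ≤ 2 * ‖d‖ := by
    rcases hd with h | h
    · exact key x hx i d h
    · have hk := key x hx i (stdVec i - x) rfl
      have h1 : (∑ j, |d j|) = ∑ j, |(stdVec i - x) j| := by
        apply Finset.sum_congr rfl
        intro j _
        have : d j = -((stdVec i - x) j) := by rw [h]; rfl
        rw [this, abs_neg]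
      have h2 : ‖d‖ = ‖stdVec i - x‖ := by rw [h, norm_neg]
      rw [h1, h2]; exact hk
  refine ⟨hmain, fun α hα x' hx' => ?_⟩
  have hdiff : x' - x = α • d := by rw [hx']; abel
  have h1 : (∑ j, |x' j - x j|) = α * ∑ j, |d j| := by
    rw [Finset.mul_sum]
    apply Finset.sum_congr rfl
    intro j _
    have : x' j - x j = α * d j := by
      have := congrArg (fun v => v j) hdiff
      simpa using this
    rw [this, abs_mul, abs_of_nonneg hα]
  have h2 : ‖x' - x‖ = α * ‖d‖ := by
    rw [hdiff, norm_smul, Real.norm_eq_abs, abs_of_nonneg hα]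
  rw [h1, h2]
  calc α * ∑ j, |d j| ≤ α * (2 * ‖d‖) := by
        exact mul_le_mul_of_nonneg_left hmain hα
    _ = 2 * (α * ‖d‖) := by ring
end

section
/- Let f : Δ_{n-1} → ℝ be differentiable with L-Lipschitz gradient, x* a stationary point of f on Δ_{n-1}, and λ_i(x) = ∇f(x)ᵀ(e_i − x) the multiplier functions. Let x ∈ Δ_{n-1} with ‖x − x*‖₁ ≤ h, let O = {i : x*_i = 0, λ_i(x*) > 0, x_i = 0} and suppose O is not all indices with positive multiplier; set δ = max_{i ∉ O} λ_i(x*). Then for every index i, |λ_i(x*) − λ_i(x)| ≤ h(L + δ/2). -/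
open RealInnerProductSpace

/-- Multiplier function `λ_i(x) = ∇f(x)ᵀ(e_i − x)`, given the gradient map `G`. -/
noncomputable def mult {n : ℕ} (G : EuclideanSpace ℝ (Fin n) → EuclideanSpace ℝ (Fin n))
    (x : EuclideanSpace ℝ (Fin n)) (i : Fin n) : ℝ :=
  ⟪G x, stdVec i - x⟫

/-- Lipschitz-type bound for the multiplier functions near a stationary point:
if `‖x − x*‖₁ ≤ h`, `O = {i : x*_i = 0, λ_i(x*) > 0, x_i = 0}`, `O` is not all of
`I^c = {i : λ_i(x*) > 0}`, and `δ = max_{i ∉ O} λ_i(x*)`, then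
`|λ_i(x*) − λ_i(x)| ≤ h (L + δ/2)` for every `i`. -/
theorem mult_lipschitz_bound {n : ℕ} (f : EuclideanSpace ℝ (Fin n) → ℝ)
    (G : EuclideanSpace ℝ (Fin n) → EuclideanSpace ℝ (Fin n))
    (hG : ∀ x, HasGradientAt f (G x) x) (L : ℝ)
    (hL : ∀ x y, (∑ i, |G x i - G y i|) ≤ L * ∑ i, |x i - y i|)
    (xs : EuclideanSpace ℝ (Fin n)) (hxs : xs ∈ probSimplex n)
    (hstat : ∀ y ∈ probSimplex n, 0 ≤ ⟪G xs, y - xs⟫)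
    (x : EuclideanSpace ℝ (Fin n)) (hx : x ∈ probSimplex n)
    (h : ℝ) (hdist : (∑ i, |x i - xs i|) ≤ h)
    (O : Set (Fin n)) (hO : O = {i | xs i = 0 ∧ 0 < mult G xs i ∧ x i = 0})
    (hOne : O ≠ {i | 0 < mult G xs i})
    (δ : ℝ) (hδ : IsGreatest {v | ∃ i ∉ O, v = mult G xs i} δ) :
    ∀ i, |mult G xs i - mult G x i| ≤ h * (L + δ / 2) := by
  intro i
  rcases Nat.eq_zero_or_pos n with hn | hn
  · subst hn; exact i.elim0
  -- basic expansion of mult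
  have hmult_eq : ∀ y j, mult G y j = G y j - ∑ k, G y k * y k := by
    intro y j
    simp [mult, PiLp.inner_apply, RCLike.inner_apply, stdVec, EuclideanSpace.single_apply,
      mul_sub, Finset.sum_sub_distrib, mul_ite, Finset.sum_ite_eq']
    simp only [sub_mul, ite_mul, one_mul, zero_mul, Finset.sum_sub_distrib, Finset.sum_ite_eq,
      Finset.sum_ite_eq', Finset.mem_univ, if_true]
    rw [Finset.sum_congr rfl fun k _ => mul_comm (y k) (G y k)]
  have hh0 : 0 ≤ h := le_trans (Finset.sum_nonneg fun j _ => abs_nonneg _) hdist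
  -- L ≥ 0
  have hL0 : 0 ≤ L := by
    have h1 := hL (stdVec ⟨0, hn⟩) 0
    have h2 : (∑ k, |stdVec (n := n) ⟨0, hn⟩ k - (0 : EuclideanSpace ℝ (Fin n)) k|) = 1 := by
      simp [stdVec, EuclideanSpace.single_apply, apply_ite]
    rw [h2, mul_one] at h1
    exact le_trans (Finset.sum_nonneg fun j _ => abs_nonneg _) h1
  -- stdVec in simplex
  have hstd : ∀ j : Fin n, stdVec j ∈ probSimplex n := by
    intro j
    constructor
    · intro k
      simp only [stdVec, EuclideanSpace.single_apply]
      split <;> norm_num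
    · simp [stdVec, EuclideanSpace.single_apply]
  have hmult_nonneg : ∀ j, 0 ≤ mult G xs j := fun j => hstat _ (hstd j)
  -- δ ≥ 0
  have hOsub : O ⊆ {i | 0 < mult G xs i} := by
    intro j hj; rw [hO] at hj; exact hj.2.1
  obtain ⟨j0, hj0S, hj0O⟩ := Set.exists_of_ssubset (hOsub.ssubset_of_ne hOne)
  have hδ0 : 0 ≤ δ := le_trans (le_of_lt hj0S) (hδ.2 ⟨j0, hj0O, rfl⟩)
  -- stationarity: the weighted sum of multipliers at xs vanishes
  have hsum_xs : ∑ j, xs j * mult G xs j = 0 := by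
    have : ∑ j, xs j * mult G xs j
        = ∑ j, xs j * G xs j - (∑ j, xs j) * ∑ k, G xs k * xs k := by
      simp only [hmult_eq, mul_sub, Finset.sum_sub_distrib, Finset.sum_mul]
    rw [this, hxs.2, one_mul]
    rw [Finset.sum_congr rfl fun k _ => mul_comm (xs k) (G xs k)]
    ring
  have hzero : ∀ j, 0 < mult G xs j → xs j = 0 := by
    intro j hj
    have hterm : ∀ k ∈ Finset.univ, (0:ℝ) ≤ xs k * mult G xs k :=
      fun k _ => mul_nonneg (hxs.1 k) (hmult_nonneg k)
    have := (Finset.sum_eq_zero_iff_of_nonneg hterm).mp hsum_xs j (Finset.mem_univ j)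
    rcases mul_eq_zero.mp this with h' | h'
    · exact h'
    · exact absurd h' (ne_of_gt hj)
  -- s := ∑ x j * mult G xs j
  set s : ℝ := ∑ j, x j * mult G xs j with hs_def
  have hs0 : 0 ≤ s :=
    Finset.sum_nonneg fun k _ => mul_nonneg (hx.1 k) (hmult_nonneg k)
  -- termwise bound for s
  have hterm_bd : ∀ j : Fin n,
      x j * mult G xs j ≤ δ * ((|x j - xs j| + (x j - xs j)) / 2) := by
    intro j
    rcases lt_or_eq_of_le (hmult_nonneg j) with hpos | heq
    · have hxs0 : xs j = 0 := hzero j hpos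
      have hxj : (|x j - xs j| + (x j - xs j)) / 2 = x j := by
        rw [hxs0]; rw [abs_of_nonneg (by simpa using hx.1 j)]; ring
      rw [hxj]
      by_cases hjO : j ∈ O
      · rw [hO] at hjO
        rw [hjO.2.2, zero_mul, mul_zero]
      · have := hδ.2 ⟨j, hjO, rfl⟩
        rw [mul_comm]
        exact mul_le_mul_of_nonneg_right this (hx.1 j)
    · rw [← heq, mul_zero]
      apply mul_nonneg hδ0
      have := abs_nonneg (x j - xs j)
      have := neg_abs_le (x j - xs j)
      linarith
  have hsumdiff : ∑ j, (x j - xs j) = 0 := by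
    rw [Finset.sum_sub_distrib, hx.2, hxs.2, sub_self]
  have hsδ : s ≤ δ * (h / 2) := by
    calc s ≤ ∑ j, δ * ((|x j - xs j| + (x j - xs j)) / 2) :=
          Finset.sum_le_sum fun j _ => hterm_bd j
      _ = δ * ((∑ j, |x j - xs j|) + ∑ j, (x j - xs j)) / 2 := by
          rw [← Finset.mul_sum, ← Finset.sum_div, Finset.sum_add_distrib, mul_div_assoc]
      _ ≤ δ * (h / 2) := by
          rw [hsumdiff, add_zero]
          rw [mul_div_assoc]
          exact mul_le_mul_of_nonneg_left (by linarith) hδ0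
  -- the key decomposition
  set T : ℝ := ∑ k, (G xs k - G x k) * (stdVec i k - x k) with hT_def
  have key : mult G xs i - mult G x i = T + s := by
    rw [hmult_eq, hmult_eq, hT_def, hs_def]
    have e1 : ∑ k, (G xs k - G x k) * (stdVec i k - x k)
        = (G xs i - G x i) - ∑ k, (G xs k - G x k) * x k := by
      simp [sub_mul, mul_sub, Finset.sum_sub_distrib, stdVec, EuclideanSpace.single_apply,
        mul_ite, Finset.sum_ite_eq', ite_mul]
      try ring
    rw [e1]
    simp only [hmult_eq, mul_sub, sub_mul, Finset.sum_sub_distrib, Finset.sum_mul,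
      ← Finset.sum_mul, hx.2]
    rw [Finset.sum_congr rfl fun k _ => mul_comm (x k) (G xs k)]
    ring
  -- bound on T
  have hx1 : ∀ k, x k ≤ 1 := by
    intro k
    rw [← hx.2]
    exact Finset.single_le_sum (fun j _ => hx.1 j) (Finset.mem_univ k)
  have hTbd : |T| ≤ L * h := by
    have h1 : |T| ≤ ∑ k, |G xs k - G x k| := by
      refine le_trans (Finset.abs_sum_le_sum_abs _ _) (Finset.sum_le_sum fun k _ => ?_)
      rw [abs_mul]
      have hek : |stdVec (n := n) i k - x k| ≤ 1 := by
        rw [abs_le]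
        simp only [stdVec, EuclideanSpace.single_apply]
        have := hx.1 k; have := hx1 k
        split <;> constructor <;> linarith
      calc |G xs k - G x k| * |stdVec i k - x k| ≤ |G xs k - G x k| * 1 :=
            mul_le_mul_of_nonneg_left hek (abs_nonneg _)
        _ = |G xs k - G x k| := mul_one _
    have h2 := hL xs x
    have h3 : (∑ k, |xs k - x k|) = ∑ k, |x k - xs k| :=
      Finset.sum_congr rfl fun k _ => abs_sub_comm _ _
    rw [h3] at h2
    calc |T| ≤ L * ∑ k, |x k - xs k| := le_trans h1 h2
      _ ≤ L * h := mul_le_mul_of_nonneg_left hdist hL0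
  rw [key]
  calc |T + s| ≤ |T| + |s| := abs_add_le _ _
    _ ≤ L * h + δ * (h / 2) := by
        rw [abs_of_nonneg hs0]; exact add_le_add hTbd hsδ
    _ = h * (L + δ / 2) := by ring
end

section
/- Let x, x* ∈ Δ_{n-1} with ‖x − x*‖₁ ≤ h, and suppose x_j = x*_j = 0 for all j in some index set O. Then |∇f(x*)ᵀ(x* − x)| ≤ (h/2)·(max_{j∉O} ∇f(x*)_j − min_{j∉O} ∇f(x*)_j). -/
open RealInnerProductSpace

/-- If `x, x*` lie in the probability simplex with `‖x − x*‖₁ ≤ h` and both vanish on an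
index set `O`, then `|gᵀ(x* − x)| ≤ (h/2)(max_{j∉O} g_j − min_{j∉O} g_j)` for any vector
`g` (in the paper, `g = ∇f(x*)`). -/
theorem inner_bound_on_common_zero {n : ℕ} (x xs : EuclideanSpace ℝ (Fin n))
    (hx : x ∈ probSimplex n) (hxs : xs ∈ probSimplex n)
    (h : ℝ) (hdist : (∑ i, |x i - xs i|) ≤ h)
    (O : Set (Fin n)) (hO : ∀ j ∈ O, x j = 0 ∧ xs j = 0)
    (g : EuclideanSpace ℝ (Fin n)) (M m : ℝ)
    (hM : IsGreatest {v | ∃ j ∉ O, v = g j} M)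
    (hm : IsLeast {v | ∃ j ∉ O, v = g j} m) :
    |⟪g, xs - x⟫| ≤ h / 2 * (M - m) := by
  set c := (M + m) / 2 with hc
  have key : ⟪g, xs - x⟫ = ∑ i, (g i - c) * (xs i - x i) := by
    have : ∑ i, (g i - c) * (xs i - x i)
        = ∑ i, g i * (xs i - x i) - c * (∑ i, xs i - ∑ i, x i) := by
      rw [mul_sub, Finset.mul_sum, Finset.mul_sum, ← Finset.sum_sub_distrib,
        ← Finset.sum_sub_distrib]
      apply Finset.sum_congr rfl; intro i _; ring
    rw [this, hx.2, hxs.2]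
    simp [PiLp.inner_apply, RCLike.inner_apply]
    exact Finset.sum_congr rfl (fun i _ => mul_comm _ _)
  rw [key]
  calc |∑ i, (g i - c) * (xs i - x i)|
      ≤ ∑ i, |(g i - c) * (xs i - x i)| := Finset.abs_sum_le_sum_abs _ _
    _ ≤ ∑ i, (M - m) / 2 * |x i - xs i| := by
        apply Finset.sum_le_sum
        intro i _
        rw [abs_mul]
        by_cases hi : i ∈ O
        · obtain ⟨h1, h2⟩ := hO i hi
          simp [h1, h2]
        · have hgi : m ≤ g i ∧ g i ≤ M := ⟨hm.2 ⟨i, hi, rfl⟩, hM.2 ⟨i, hi, rfl⟩⟩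
          have h1 : |g i - c| ≤ (M - m) / 2 := by
            rw [abs_le]; constructor <;> [linarith [hgi.1]; linarith [hgi.2]]
          rw [abs_sub_comm (xs i) (x i)]
          exact mul_le_mul_of_nonneg_right h1 (abs_nonneg _)
    _ = (M - m) / 2 * ∑ i, |x i - xs i| := by rw [Finset.mul_sum]
    _ ≤ (M - m) / 2 * h := by
        have hMm : m ≤ M := hm.2 hM.1
        exact mul_le_mul_of_nonneg_left hdist (by linarith)
    _ = h / 2 * (M - m) := by ring
end

section
/- Let f : Δ_{n-1} → ℝ be differentiable with L-Lipschitz gradient and f* = min_{Δ_{n-1}} f. Let {x_k} be generated by the AFW algorithm started at a vertex x_0 with stepsizes α_k ≥ ᾱ_k = min(α_k^max, −∇f(x_k)ᵀd_k/(L‖d_k‖²)) satisfying f(x_k) − f(x_{k+1}) ≥ ρ ᾱ_k (−∇f(x_k)ᵀd_k) for some ρ > 0. Then for every T ∈ ℕ the minimal Frank–Wolfe gap g*_T = min_{0≤k≤T−1} g(x_k) satisfies g*_T ≤ max( √(4L(f(x_0) − f*)/(ρT)), 4(f(x_0) − f*)/T ). -/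
open RealInnerProductSpace

/-- The Frank–Wolfe gap `g(x) = max_i (−λ_i(x))`. -/
noncomputable def fwGap {n : ℕ} (G : EuclideanSpace ℝ (Fin (n+1)) → EuclideanSpace ℝ (Fin (n+1)))
    (x : EuclideanSpace ℝ (Fin (n+1))) : ℝ :=
  Finset.univ.sup' Finset.univ_nonempty (fun i => -mult G x i)

set_option maxHeartbeats 2000000

lemma stdVec_apply {n : ℕ} (i j : Fin n) : stdVec i j = if j = i then 1 else 0 := by
  simp [stdVec, EuclideanSpace.single_apply]

lemma stdVec_mem {n : ℕ} (i : Fin n) : stdVec i ∈ probSimplex n := by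
  constructor
  · intro j; rw [stdVec_apply]; split <;> norm_num
  · simp [stdVec_apply]

lemma coord_le_one {n : ℕ} {x : EuclideanSpace ℝ (Fin n)} (hx : x ∈ probSimplex n) (i : Fin n) :
    x i ≤ 1 := by
  have := Finset.single_le_sum (f := fun j => x j) (fun j _ => hx.1 j) (Finset.mem_univ i)
  rw [hx.2] at this
  exact this

lemma eq_stdVec_of_coord_one {n : ℕ} {x : EuclideanSpace ℝ (Fin n)} (hx : x ∈ probSimplex n)
    {i : Fin n} (hi : x i = 1) : x = stdVec i := by
  have hsum := hx.2
  rw [← Finset.add_sum_erase _ _ (Finset.mem_univ i), hi] at hsum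
  have h0 : ∑ j ∈ Finset.univ.erase i, x j = 0 := by linarith
  have hz : ∀ j ∈ Finset.univ.erase i, x j = 0 :=
    (Finset.sum_eq_zero_iff_of_nonneg (fun j _ => hx.1 j)).mp h0
  ext j
  rw [stdVec_apply]
  by_cases hji : j = i
  · subst hji; simp [hi]
  · rw [if_neg hji]
    exact hz j (Finset.mem_erase.mpr ⟨hji, Finset.mem_univ j⟩)

lemma sq_norm_le_two {n : ℕ} {x y : EuclideanSpace ℝ (Fin n)} (hx : x ∈ probSimplex n)
    (hy : y ∈ probSimplex n) : ‖x - y‖ ^ 2 ≤ 2 := by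
  have h1 : ‖x - y‖ ^ 2 = ∑ i, (x i - y i) * (x i - y i) := by
    rw [EuclideanSpace.norm_sq_eq]
    simp only [PiLp.sub_apply, Real.norm_eq_abs, sq_abs, sq, abs_mul_abs_self]
  rw [h1]
  have h2 : ∀ i : Fin n, (x i - y i) * (x i - y i) ≤ x i + y i := by
    intro i
    have hx1 := coord_le_one hx i
    have hy1 := coord_le_one hy i
    nlinarith [hx.1 i, hy.1 i]
  calc ∑ i, (x i - y i) * (x i - y i) ≤ ∑ i, (x i + y i) :=
        Finset.sum_le_sum (fun i _ => h2 i)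
    _ = 2 := by rw [Finset.sum_add_distrib, hx.2, hy.2]; norm_num

lemma descent {m : ℕ} (f : EuclideanSpace ℝ (Fin m) → ℝ)
    (G : EuclideanSpace ℝ (Fin m) → EuclideanSpace ℝ (Fin m))
    (hG : ∀ x, HasGradientAt f (G x) x) (L : ℝ)
    (hL : ∀ x y, ‖G x - G y‖ ≤ L * ‖x - y‖) (x v : EuclideanSpace ℝ (Fin m)) :
    f (x + v) ≤ f x + ⟪G x, v⟫ + L / 2 * ‖v‖ ^ 2 := by
  set h : ℝ → ℝ := fun t => f (x + t • v) - t * ⟪G x, v⟫ - L * t ^ 2 * ‖v‖ ^ 2 / 2 with hh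
  have hline : ∀ t : ℝ, HasDerivAt (fun s : ℝ => x + s • v) v t := by
    intro t
    simpa using ((hasDerivAt_id t).smul_const v).const_add x
  have hd : ∀ t : ℝ, HasDerivAt h
      (⟪G (x + t • v), v⟫ - ⟪G x, v⟫ - L * t * ‖v‖ ^ 2) t := by
    intro t
    have h1 : HasDerivAt (fun s : ℝ => f (x + s • v)) (⟪G (x + t • v), v⟫) t := by
      have := (hG (x + t • v)).hasFDerivAt.comp_hasDerivAt t (hline t)
      simp only [InnerProductSpace.toDual_apply_apply] at this
      exact this
    have h2 : HasDerivAt (fun s : ℝ => s * ⟪G x, v⟫) (⟪G x, v⟫) t := by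
      simpa using (hasDerivAt_id t).mul_const (⟪G x, v⟫)
    have h3 : HasDerivAt (fun s : ℝ => L * s ^ 2 * ‖v‖ ^ 2 / 2) (L * t * ‖v‖ ^ 2) t := by
      have h := ((hasDerivAt_pow 2 t).const_mul L).mul_const (‖v‖ ^ 2 / 2)
      have e1 : (fun y : ℝ => L * y ^ 2 * (‖v‖ ^ 2 / 2)) =
          (fun s : ℝ => L * s ^ 2 * ‖v‖ ^ 2 / 2) := by funext s; ring
      rw [e1] at h
      have e2 : L * ((2:ℕ) * t ^ (2 - 1)) * (‖v‖ ^ 2 / 2) = L * t * ‖v‖ ^ 2 := by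
        push_cast; ring
      rwa [e2] at h
    exact (h1.sub h2).sub h3
  have hmono : AntitoneOn h (Set.Icc (0:ℝ) 1) := by
    apply antitoneOn_of_deriv_nonpos (convex_Icc 0 1)
    · exact fun t _ => (hd t).continuousAt.continuousWithinAt
    · exact fun t _ => ((hd t).differentiableAt).differentiableWithinAt
    · intro t ht
      rw [interior_Icc] at ht
      rw [(hd t).deriv]
      have hb : ⟪G (x + t • v), v⟫ - ⟪G x, v⟫ ≤ L * t * ‖v‖ ^ 2 := by
        have heq : ⟪G (x + t • v), v⟫ - ⟪G x, v⟫ = ⟪G (x + t • v) - G x, v⟫ :=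
          (inner_sub_left _ _ _).symm
        rw [heq]
        have h1 : ⟪G (x + t • v) - G x, v⟫ ≤ ‖G (x + t • v) - G x‖ * ‖v‖ :=
          real_inner_le_norm _ _
        have h2 : ‖G (x + t • v) - G x‖ ≤ L * (t * ‖v‖) := by
          have := hL (x + t • v) x
          rwa [add_sub_cancel_left, norm_smul, Real.norm_eq_abs, abs_of_pos ht.1] at this
        have hv : (0:ℝ) ≤ ‖v‖ := norm_nonneg _
        nlinarith [mul_le_mul_of_nonneg_right h2 hv]
      linarith
  have := hmono (Set.mem_Icc.mpr ⟨le_refl 0, zero_le_one⟩)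
    (Set.mem_Icc.mpr ⟨zero_le_one, le_refl 1⟩) zero_le_one
  simp only [hh, one_smul, zero_smul, add_zero, one_pow, zero_pow, mul_zero, zero_mul,
    mul_one, sub_zero, one_mul] at this
  linarith

/-- `O(1/√T)` rate for the minimal FW gap of the AFW in the nonconvex case:
for AFW started at a vertex with stepsizes `α_k ≥ ᾱ_k` satisfying the sufficient decrease
condition with constant `ρ > 0`, for every `T`,
`g*_T ≤ max(√(4L(f(x₀) − f*)/(ρT)), 4(f(x₀) − f*)/T)`. -/
theorem afw_nonconvex_gap_rate {n : ℕ} (f : EuclideanSpace ℝ (Fin (n+1)) → ℝ)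
    (G : EuclideanSpace ℝ (Fin (n+1)) → EuclideanSpace ℝ (Fin (n+1)))
    (hG : ∀ x, HasGradientAt f (G x) x) (L : ℝ) (hLpos : 0 < L)
    (hL : ∀ x y, ‖G x - G y‖ ≤ L * ‖x - y‖)
    (fstar : ℝ) (hfstar : IsLeast (f '' probSimplex (n+1)) fstar)
    (x : ℕ → EuclideanSpace ℝ (Fin (n+1)))
    (d : ℕ → EuclideanSpace ℝ (Fin (n+1))) (α αmax ᾱ : ℕ → ℝ)
    (hx0 : ∃ i, x 0 = stdVec i)
    (hxmem : ∀ k, x k ∈ probSimplex (n+1))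
    (hstep : ∀ k, x (k + 1) = x k + α k • d k)
    (hdir : ∀ k, (∃ i, d k = stdVec i - x k ∧ αmax k = 1) ∨
                 (∃ i, 0 < x k i ∧ d k = x k - stdVec i ∧ αmax k = x k i / (1 - x k i)))
    (hsel : ∀ k, fwGap G (x k) ≤ -⟪G (x k), d k⟫)
    (hᾱ : ∀ k, ᾱ k = min (αmax k) (-⟪G (x k), d k⟫ / (L * ‖d k‖ ^ 2)))
    (hα : ∀ k, ᾱ k ≤ α k ∧ α k ≤ αmax k)
    (ρ : ℝ) (hρ : 0 < ρ)
    (hdec : ∀ k, f (x k) - f (x (k + 1)) ≥ ρ * ᾱ k * (-⟪G (x k), d k⟫)) :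
    ∀ T : ℕ, ∀ hT : 0 < T,
      (Finset.range T).inf' (Finset.nonempty_range_iff.mpr hT.ne') (fun k => fwGap G (x k)) ≤
        max (Real.sqrt (4 * L * (f (x 0) - fstar) / (ρ * T))) (4 * (f (x 0) - fstar) / T) := by
  classical
  intro T hT
  by_contra hcon
  push_neg at hcon
  set gs := (Finset.range T).inf' (Finset.nonempty_range_iff.mpr hT.ne')
    (fun k => fwGap G (x k)) with hgsdef
  have hTpos : (0:ℝ) < T := by exact_mod_cast hT
  have hgs_pos : 0 < gs :=
    lt_of_le_of_lt (le_trans (Real.sqrt_nonneg _) (le_max_left _ _)) hcon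
  have hfx0 : fstar ≤ f (x 0) := hfstar.2 ⟨x 0, hxmem 0, rfl⟩
  have hΔnn : (0:ℝ) ≤ f (x 0) - fstar := by linarith
  set c := min (ρ * gs ^ 2 / (2 * L)) (gs / 2) with hcdef
  have hcle1 : c ≤ ρ * gs ^ 2 / (2 * L) := by rw [hcdef]; exact min_le_left _ _
  have hcle2 : c ≤ gs / 2 := by rw [hcdef]; exact min_le_right _ _
  have hcT : 2 * (f (x 0) - fstar) < c * T := by
    have h1 : Real.sqrt (4 * L * (f (x 0) - fstar) / (ρ * T)) < gs :=
      lt_of_le_of_lt (le_max_left _ _) hcon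
    have h2 : 4 * (f (x 0) - fstar) / T < gs := lt_of_le_of_lt (le_max_right _ _) hcon
    have hρT : (0:ℝ) < ρ * T := by positivity
    have h3 : 4 * L * (f (x 0) - fstar) / (ρ * T) < gs ^ 2 := by
      have hs := Real.sq_sqrt (show (0:ℝ) ≤ 4 * L * (f (x 0) - fstar) / (ρ * T) by positivity)
      nlinarith [Real.sqrt_nonneg (4 * L * (f (x 0) - fstar) / (ρ * T))]
    have h4 : 4 * L * (f (x 0) - fstar) < gs ^ 2 * (ρ * T) := (div_lt_iff₀ hρT).mp h3
    have h5 : 4 * (f (x 0) - fstar) < gs * T := (div_lt_iff₀ hTpos).mp h2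
    rcases min_cases (ρ * gs ^ 2 / (2 * L)) (gs / 2) with ⟨he, -⟩ | ⟨he, -⟩
    · rw [hcdef, he]
      rw [div_mul_eq_mul_div, lt_div_iff₀ (by positivity : (0:ℝ) < 2 * L)]
      nlinarith
    · rw [hcdef, he]
      nlinarith
  set spt : ℕ → Finset (Fin (n+1)) := fun k => Finset.univ.filter (fun i => x k i ≠ 0)
    with hsptdef
  have happ : ∀ (k : ℕ) (j : Fin (n+1)), x (k+1) j = x k j + α k * d k j := by
    intro k j
    rw [hstep k]
    simp [PiLp.add_apply, PiLp.smul_apply, smul_eq_mul]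
  have hspt0 : (spt 0).card = 1 := by
    obtain ⟨i, hi⟩ := hx0
    have hs : spt 0 = {i} := by
      ext j
      by_cases hji : j = i
      · simp [hsptdef, hi, stdVec_apply, hji]
      · simp [hsptdef, hi, stdVec_apply, hji]
    rw [hs, Finset.card_singleton]
  have hsptT : 1 ≤ (spt T).card := by
    have hs := (hxmem T).2
    have hex : ∃ j, x T j ≠ 0 := by
      by_contra hall
      push_neg at hall
      rw [Finset.sum_congr rfl (fun j _ => hall j)] at hs
      simp at hs
    obtain ⟨j, hj⟩ := hex
    exact Finset.card_pos.mpr ⟨j, Finset.mem_filter.mpr ⟨Finset.mem_univ j, hj⟩⟩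
  have hsupp : ∀ k : ℕ, (spt (k+1)).card ≤ (spt k).card + 1 := by
    intro k
    obtain ⟨i, hdk, -⟩ | ⟨i, -, hdk, -⟩ := hdir k
    all_goals {
      have hsub : spt (k+1) ⊆ insert i (spt k) := by
        intro j hj
        have hj' : x (k+1) j ≠ 0 := (Finset.mem_filter.mp hj).2
        by_contra hnot
        have hji : j ≠ i := fun h => hnot (by rw [h]; exact Finset.mem_insert_self i _)
        have hxj : x k j = 0 := by
          by_contra hne
          exact hnot (Finset.mem_insert_of_mem (Finset.mem_filter.mpr ⟨Finset.mem_univ j, hne⟩))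
        apply hj'
        rw [happ k j, hdk]
        simp [PiLp.sub_apply, stdVec_apply, hji, hxj]
      calc (spt (k+1)).card ≤ (insert i (spt k)).card := Finset.card_le_card hsub
        _ ≤ (spt k).card + 1 := Finset.card_insert_le _ _
    }
  have hgapk : ∀ k, k < T → gs ≤ -⟪G (x k), d k⟫ := by
    intro k hk
    have h1 : gs ≤ fwGap G (x k) := by
      rw [hgsdef]; exact Finset.inf'_le _ (Finset.mem_range.mpr hk)
    exact h1.trans (hsel k)
  have hlt1 : ∀ k, k < T → ∀ i, d k = x k - stdVec i → x k i < 1 := by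
    intro k hk i hdk
    rcases lt_or_eq_of_le (coord_le_one (hxmem k) i) with h | h
    · exact h
    · exfalso
      have hxe := eq_stdVec_of_coord_one (hxmem k) h
      have hd0 : d k = 0 := by rw [hdk, hxe, sub_self]
      have hg := hgapk k hk
      rw [hd0, inner_zero_right] at hg
      norm_num at hg
      linarith
  have hαmaxnn : ∀ k, k < T → 0 ≤ αmax k := by
    intro k hk
    obtain ⟨i, hdk, hαm⟩ | ⟨i, hxi, hdk, hαm⟩ := hdir k
    · rw [hαm]; norm_num
    · rw [hαm]
      have := hlt1 k hk i hdk
      exact div_nonneg hxi.le (by linarith)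
  have hdec0 : ∀ k, k < T → 0 ≤ f (x k) - f (x (k+1)) := by
    intro k hk
    refine le_trans ?_ (hdec k)
    have h1 : 0 ≤ ᾱ k := by
      rw [hᾱ k]
      refine le_min (hαmaxnn k hk) (div_nonneg ?_ ?_)
      · linarith [hgapk k hk, hgs_pos]
      · positivity
    have h2 : 0 ≤ -⟪G (x k), d k⟫ := by linarith [hgapk k hk, hgs_pos]
    exact mul_nonneg (mul_nonneg hρ.le h1) h2
  have hkey : ∀ k, k < T →
      c ≤ f (x k) - f (x (k+1)) ∨ (spt (k+1)).card + 1 ≤ (spt k).card := by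
    intro k hk
    have hg' := hgapk k hk
    have hg'pos : 0 < -⟪G (x k), d k⟫ := lt_of_lt_of_le hgs_pos hg'
    have hdne : d k ≠ 0 := by
      intro h0
      rw [h0, inner_zero_right] at hg'pos
      norm_num at hg'pos
    have hdpos : 0 < ‖d k‖ := norm_pos_iff.mpr hdne
    have hLd : 0 < L * ‖d k‖ ^ 2 := by positivity
    have hdsq : ‖d k‖ ^ 2 ≤ 2 := by
      obtain ⟨i, hdk, -⟩ | ⟨i, -, hdk, -⟩ := hdir k
      · rw [hdk]; exact sq_norm_le_two (stdVec_mem i) (hxmem k)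
      · rw [hdk]; exact sq_norm_le_two (hxmem k) (stdVec_mem i)
    have hgood : -⟪G (x k), d k⟫ / (L * ‖d k‖ ^ 2) ≤ αmax k →
        c ≤ f (x k) - f (x (k+1)) := by
      intro hr
      have hᾱk : ᾱ k = -⟪G (x k), d k⟫ / (L * ‖d k‖ ^ 2) := by
        rw [hᾱ k, min_eq_right hr]
      have hd1 := hdec k
      rw [hᾱk] at hd1
      have e1 : ρ * (-⟪G (x k), d k⟫ / (L * ‖d k‖ ^ 2)) * -⟪G (x k), d k⟫
          = ρ * (-⟪G (x k), d k⟫) ^ 2 / (L * ‖d k‖ ^ 2) := by ring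
      rw [e1] at hd1
      have e2 : ρ * gs ^ 2 / (2 * L) ≤ ρ * (-⟪G (x k), d k⟫) ^ 2 / (L * ‖d k‖ ^ 2) := by
        rw [div_le_div_iff₀ (by positivity) hLd]
        have hsq : gs ^ 2 ≤ (-⟪G (x k), d k⟫) ^ 2 := by nlinarith
        nlinarith [mul_le_mul_of_nonneg_left (show L * ‖d k‖ ^ 2 ≤ 2 * L by nlinarith)
            (mul_nonneg hρ.le (sq_nonneg gs)),
          mul_le_mul_of_nonneg_left hsq (by positivity : (0:ℝ) ≤ ρ * (2 * L))]
      linarith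
    obtain ⟨i, hdk, hαm⟩ | ⟨i, hxi, hdk, hαm⟩ := hdir k
    · left
      by_cases hr : -⟪G (x k), d k⟫ / (L * ‖d k‖ ^ 2) ≤ αmax k
      · exact hgood hr
      · push_neg at hr
        rw [hαm] at hr
        have hᾱk : ᾱ k = 1 := by rw [hᾱ k, hαm, min_eq_left hr.le]
        have hα1 : α k = 1 := le_antisymm (by rw [← hαm]; exact (hα k).2)
          (by rw [← hᾱk]; exact (hα k).1)
        have hx1 : x (k+1) = x k + d k := by rw [hstep k, hα1, one_smul]
        have hdesc := descent f G hG L hL (x k) (d k)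
        have hLd' : L * ‖d k‖ ^ 2 < -⟪G (x k), d k⟫ := (one_lt_div hLd).mp hr
        rw [hx1]
        nlinarith [hcle2, hg', hdesc, hLd']
    · by_cases hr : -⟪G (x k), d k⟫ / (L * ‖d k‖ ^ 2) ≤ αmax k
      · exact Or.inl (hgood hr)
      · right
        push_neg at hr
        have hᾱk : ᾱ k = αmax k := by rw [hᾱ k, min_eq_left hr.le]
        have hαk : α k = αmax k := le_antisymm (hα k).2 (by rw [← hᾱk]; exact (hα k).1)
        have hxi1 : x k i < 1 := hlt1 k hk i hdk
        have h1xi : (1:ℝ) - x k i ≠ 0 := ne_of_gt (by linarith)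
        have hmemi : i ∈ spt k := Finset.mem_filter.mpr ⟨Finset.mem_univ i, ne_of_gt hxi⟩
        have hcoordi : x (k+1) i = 0 := by
          rw [happ k i, hdk]
          simp only [PiLp.sub_apply, stdVec_apply, if_pos rfl, ↓reduceIte]
          rw [hαk, hαm]
          field_simp
          ring
        have hsub : spt (k+1) ⊆ (spt k).erase i := by
          intro j hj
          have hj' : x (k+1) j ≠ 0 := (Finset.mem_filter.mp hj).2
          have hji : j ≠ i := by rintro rfl; exact hj' hcoordi
          refine Finset.mem_erase.mpr ⟨hji, Finset.mem_filter.mpr ⟨Finset.mem_univ j, ?_⟩⟩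
          intro h0
          apply hj'
          rw [happ k j, hdk]
          simp [PiLp.sub_apply, stdVec_apply, hji, h0]
        have h1 := Finset.card_le_card hsub
        have h2 := Finset.card_erase_of_mem hmemi
        have h3 := Finset.card_pos.mpr ⟨i, hmemi⟩
        omega
  have hind : ∀ k, k ≤ T → (spt k).card +
      2 * ((Finset.range k).filter (fun j => ¬ c ≤ f (x j) - f (x (j+1)))).card ≤ 1 + k := by
    intro k
    induction k with
    | zero => intro _; simp [hspt0]
    | succ k ih =>
      intro hk1
      have hkT : k < T := hk1
      have ih' := ih (le_of_lt hkT)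
      rw [Finset.range_add_one, Finset.filter_insert]
      by_cases hg : c ≤ f (x k) - f (x (k+1))
      · rw [if_neg (not_not_intro hg)]
        have := hsupp k
        omega
      · rw [if_pos hg]
        rw [Finset.card_insert_of_notMem (by simp)]
        have hdropk := (hkey k hkT).resolve_left hg
        omega
  have hDT := hind T le_rfl
  set Dset := (Finset.range T).filter (fun j => ¬ c ≤ f (x j) - f (x (j+1))) with hD
  set Nset := (Finset.range T).filter (fun j => c ≤ f (x j) - f (x (j+1))) with hN
  have hcard : Nset.card + Dset.card = T := by
    rw [hN, hD]
    exact (Finset.card_filter_add_card_filter_not _).trans (Finset.card_range T)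
  have h2N : T ≤ 2 * Nset.card := by omega
  have hsplit : (∑ k ∈ Nset, (f (x k) - f (x (k+1)))) + (∑ k ∈ Dset, (f (x k) - f (x (k+1))))
      = ∑ k ∈ Finset.range T, (f (x k) - f (x (k+1))) := by
    rw [hN, hD]
    exact Finset.sum_filter_add_sum_filter_not _ _ _
  have htel : ∑ k ∈ Finset.range T, (f (x k) - f (x (k+1))) = f (x 0) - f (x T) :=
    Finset.sum_range_sub' (fun k => f (x k)) T
  have hA : (Nset.card : ℝ) * c ≤ ∑ k ∈ Nset, (f (x k) - f (x (k+1))) := by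
    rw [hN]
    have h := Finset.sum_le_sum (f := fun _ => c) (g := fun k => f (x k) - f (x (k+1)))
      (s := (Finset.range T).filter (fun j => c ≤ f (x j) - f (x (j+1))))
      (fun k hk => (Finset.mem_filter.mp hk).2)
    simpa [Finset.sum_const, nsmul_eq_mul, mul_comm] using h
  have hB : 0 ≤ ∑ k ∈ Dset, (f (x k) - f (x (k+1))) := by
    rw [hD]
    exact Finset.sum_nonneg
      (fun k hk => hdec0 k (Finset.mem_range.mp (Finset.mem_filter.mp hk).1))
  have hfT : fstar ≤ f (x T) := hfstar.2 ⟨x T, hxmem T, rfl⟩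
  have hfin : (Nset.card : ℝ) * c ≤ f (x 0) - fstar := by
    have h1 : (Nset.card : ℝ) * c ≤ f (x 0) - f (x T) := by
      rw [← htel, ← hsplit]; linarith
    linarith
  have hNR : (T:ℝ) ≤ 2 * Nset.card := by exact_mod_cast h2N
  have hNpos : (0:ℝ) < Nset.card := by
    have h0 : 0 < Nset.card := by omega
    exact_mod_cast h0
  nlinarith [mul_lt_mul_of_pos_left hcT hNpos, mul_le_mul_of_nonneg_right hNR hΔnn,
    mul_le_mul_of_nonneg_right hfin hTpos.le]
end

section
/- Let f : Δ_{n-1} → ℝ with L-Lipschitz gradient, x* a stationary point with I^c = {i : λ_i(x*) > 0} nonempty, and δ_min = min{λ_i(x*) : i ∈ I^c}. If x ∈ Δ_{n-1} satisfies ‖x − x*‖₁ < δ_min/(δ_min + 2L) and x_i = 0 for all i ∈ I^c, then λ_i(x) > 0 for all i ∈ I^c. -/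
open RealInnerProductSpace

private lemma inner_sum' {n : ℕ} (a b : EuclideanSpace ℝ (Fin n)) :
    ⟪a, b⟫ = ∑ i, a i * b i := by
  simp [PiLp.inner_apply, RCLike.inner_apply, mul_comm]

private lemma mult_eq {n : ℕ} (G : EuclideanSpace ℝ (Fin n) → EuclideanSpace ℝ (Fin n))
    (y : EuclideanSpace ℝ (Fin n)) (j : Fin n) :
    mult G y j = G y j - ∑ k, G y k * y k := by
  simp only [mult, stdVec, inner_sub_right]
  rw [inner_sum', inner_sum']
  congr 1
  simp [EuclideanSpace.single_apply, Finset.sum_ite_eq']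

/-- If `x` lies in the ball `‖x − x*‖₁ < δ_min/(δ_min + 2L)` around a stationary point
`x*` and `x_i = 0` for all `i ∈ I^c = {i : λ_i(x*) > 0}`, then `λ_i(x) > 0` for all
`i ∈ I^c`. -/
theorem multipliers_positive_near_stationary {n : ℕ}
    (f : EuclideanSpace ℝ (Fin n) → ℝ)
    (G : EuclideanSpace ℝ (Fin n) → EuclideanSpace ℝ (Fin n))
    (hG : ∀ x, HasGradientAt f (G x) x) (L : ℝ) (hLpos : 0 < L)
    (hL : ∀ x y, (∑ i, |G x i - G y i|) ≤ L * ∑ i, |x i - y i|)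
    (xs : EuclideanSpace ℝ (Fin n)) (hxs : xs ∈ probSimplex n)
    (hstat : ∀ y ∈ probSimplex n, 0 ≤ ⟪G xs, y - xs⟫)
    (hIc : ∃ i, 0 < mult G xs i)
    (δmin : ℝ) (hδmin : IsLeast {v | ∃ i, 0 < mult G xs i ∧ v = mult G xs i} δmin)
    (x : EuclideanSpace ℝ (Fin n)) (hx : x ∈ probSimplex n)
    (hdist : (∑ i, |x i - xs i|) < δmin / (δmin + 2 * L))
    (hsupp : ∀ i, 0 < mult G xs i → x i = 0) :
    ∀ i, 0 < mult G xs i → 0 < mult G x i := by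
  obtain ⟨⟨i0, hi0, hδeq⟩, hlb⟩ := hδmin
  have hδpos : 0 < δmin := hδeq ▸ hi0
  obtain ⟨hxnn, hxsum⟩ := hx
  obtain ⟨hsnn, hssum⟩ := hxs
  set c : ℝ := ∑ k, G xs k * xs k with hc
  -- all multipliers at xs are nonnegative
  have hmnn : ∀ j, 0 ≤ mult G xs j := by
    intro j
    refine hstat (stdVec j) ⟨?_, ?_⟩
    · intro k
      simp only [stdVec, EuclideanSpace.single_apply]
      split <;> norm_num
    · simp [stdVec, EuclideanSpace.single_apply, Finset.sum_ite_eq']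
  -- complementarity: xs j = 0 whenever mult G xs j > 0
  have hsum0 : ∑ j, xs j * mult G xs j = 0 := by
    have h1 : ∀ j, xs j * mult G xs j = xs j * G xs j - xs j * c := by
      intro j; rw [mult_eq]; ring
    rw [Finset.sum_congr rfl fun j _ => h1 j, Finset.sum_sub_distrib, ← Finset.sum_mul, hssum]
    have : ∑ j, xs j * G xs j = c := by
      rw [hc]; exact Finset.sum_congr rfl fun j _ => mul_comm _ _
    rw [this]; ring
  have hcomp : ∀ j, 0 < mult G xs j → xs j = 0 := by
    intro j hj
    have := (Finset.sum_eq_zero_iff_of_nonneg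
      (fun k _ => mul_nonneg (hsnn k) (hmnn k))).mp hsum0 j (Finset.mem_univ j)
    rcases mul_eq_zero.mp this with h | h
    · exact h
    · exact absurd h (ne_of_gt hj)
  -- key: ⟪G xs, x - xs⟫ = 0
  have hkey : ∑ j, G xs j * (x j - xs j) = 0 := by
    have h1 : ∀ j, G xs j * (x j - xs j) = mult G xs j * (x j - xs j) + c * (x j - xs j) := by
      intro j; rw [mult_eq]; ring
    have h2 : ∀ j, mult G xs j * (x j - xs j) = 0 := by
      intro j
      rcases lt_or_eq_of_le (hmnn j) with h | h
      · rw [hsupp j h, hcomp j h]; ring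
      · rw [← h]; ring
    rw [Finset.sum_congr rfl fun j _ => h1 j, Finset.sum_add_distrib,
      Finset.sum_congr rfl fun j _ => h2 j, ← Finset.mul_sum, Finset.sum_sub_distrib,
      hxsum, hssum]
    simp
  intro i hi
  have hge : δmin ≤ mult G xs i := hlb ⟨i, hi, rfl⟩
  set D : ℝ := ∑ j, (G x j - G xs j) * ((if j = i then 1 else 0) - x j) with hD
  -- decomposition
  have heq : mult G x i = mult G xs i + D := by
    have hDe : D = (G x i - G xs i) - ∑ j, (G x j - G xs j) * x j := by
      rw [hD]
      have : ∀ j, (G x j - G xs j) * ((if j = i then (1:ℝ) else 0) - x j)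
          = (if j = i then G x j - G xs j else 0) - (G x j - G xs j) * x j := by
        intro j; split <;> ring
      rw [Finset.sum_congr rfl fun j _ => this j, Finset.sum_sub_distrib,
        Finset.sum_ite_eq']
      simp
    have e1 : ∑ j, (G x j - G xs j) * x j
        = ∑ j, G x j * x j - ∑ j, G xs j * x j := by
      rw [← Finset.sum_sub_distrib]; exact Finset.sum_congr rfl fun j _ => by ring
    have e2 : ∑ j, G xs j * (x j - xs j)
        = ∑ j, G xs j * x j - ∑ j, G xs j * xs j := by
      rw [← Finset.sum_sub_distrib]; exact Finset.sum_congr rfl fun j _ => by ring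
    rw [mult_eq, mult_eq, hDe, e1]
    have := e2 ▸ hkey
    linarith
  -- bound on |D|
  have hx1 : ∀ j, x j ≤ 1 := by
    intro j
    calc x j ≤ ∑ k, x k := Finset.single_le_sum (fun k _ => hxnn k) (Finset.mem_univ j)
    _ = 1 := hxsum
  have habs : ∀ j, |(if j = i then (1:ℝ) else 0) - x j| ≤ 1 := by
    intro j
    rw [abs_le]
    split <;> constructor <;> linarith [hxnn j, hx1 j]
  have hDb : |D| ≤ L * ∑ j, |x j - xs j| := by
    calc |D| ≤ ∑ j, |(G x j - G xs j) * ((if j = i then 1 else 0) - x j)| :=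
          Finset.abs_sum_le_sum_abs _ _
    _ ≤ ∑ j, |G x j - G xs j| := by
        refine Finset.sum_le_sum fun j _ => ?_
        rw [abs_mul]
        exact mul_le_of_le_one_right (abs_nonneg _) (habs j)
    _ ≤ L * ∑ j, |x j - xs j| := hL x xs
  -- final arithmetic
  have hden : 0 < δmin + 2 * L := by linarith
  have h5 : L * (δmin / (δmin + 2 * L)) < δmin := by
    rw [mul_div_assoc', div_lt_iff₀ hden]
    nlinarith
  have h6 : L * (∑ j, |x j - xs j|) ≤ L * (δmin / (δmin + 2 * L)) :=
    mul_le_mul_of_nonneg_left (le_of_lt hdist) (le_of_lt hLpos)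
  have h7 : -|D| ≤ D := neg_abs_le D
  rw [heq]
  linarith
end
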